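/- Let G be a finite simple connected graph, let r_0 ∈ V(G), set r = (r_0, r_0) ∈ V(G□G), and let T be an even positive integer. Let w_1, …, w_{T/2} be weight functions of tree strategies of G□G rooted at r such that Σ_{t=1}^{T/2} (w_t(v) + w_t(σ(v))) ≥ T for every v ∈ V(G□G)\{r}, where σ(u_1, u_2) = (u_2, u_1). Then π(G□G, r) ≤ ⌊ẑ/T⌋ + 1, where ẑ = Σ_{t=1}^{T/2} Σ_{v∈V(G□G)\{r}} (w_t(v) + w_t(σ(v))). -/

import Mathlib

open Finset

/-- A single pebbling move on graph `G`: remove two pebbles from a vertex `u` and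
place one pebble on a vertex `v` adjacent to `u`. -/
def IsPebblingMove {V : Type*} (G : SimpleGraph V) (C C' : V → ℕ) : Prop :=
  ∃ u v, G.Adj u v ∧ 2 ≤ C u ∧
    C' u = C u - 2 ∧ C' v = C v + 1 ∧ ∀ w, w ≠ u → w ≠ v → C' w = C w

/-- A configuration `C` is `r`-solvable if some sequence of pebbling moves starting
from `C` places at least one pebble on `r`. -/
def Solvable {V : Type*} (G : SimpleGraph V) (r : V) (C : V → ℕ) : Prop :=
  ∃ C', Relation.ReflTransGen (IsPebblingMove G) C C' ∧ 1 ≤ C' r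

/-- The rooted pebbling number `π(G, r)`: the smallest `k` such that every
configuration of size `k` is `r`-solvable. -/
noncomputable def pebblingNumber {V : Type*} [Fintype V] (G : SimpleGraph V) (r : V) : ℕ :=
  sInf {k : ℕ | ∀ C : V → ℕ, (∑ v, C v) = k → Solvable G r C}

/-- A tree strategy of `G` rooted at `r`: a subtree of `G` containing `r` (encoded by its
vertex set and parent map) together with an associated nonnegative weight function. -/
structure TreeStrategy {V : Type*} (G : SimpleGraph V) (r : V) where
  /-- the vertices of the subtree -/
  verts : Set V
  /-- the parent map of the subtree (towards the root) -/
  parent : V → V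
  root_mem : r ∈ verts
  parent_mem : ∀ v ∈ verts, v ≠ r → parent v ∈ verts
  parent_adj : ∀ v ∈ verts, v ≠ r → G.Adj (parent v) v
  reaches_root : ∀ v ∈ verts, ∃ n : ℕ, parent^[n] v = r
  /-- the weight function -/
  weight : V → ℝ
  weight_nonneg : ∀ v, 0 ≤ weight v
  weight_root : weight r = 0
  weight_parent : ∀ v ∈ verts, v ≠ r → ¬ G.Adj v r → 2 * weight v ≤ weight (parent v)
  weight_zero : ∀ v ∉ verts, weight v = 0

private lemma solvable_of_move {V : Type*} {G : SimpleGraph V} {r : V} {C C' : V → ℕ}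
    (h : IsPebblingMove G C C') (h' : Solvable G r C') : Solvable G r C := by
  obtain ⟨D, hD, hr⟩ := h'
  exact ⟨D, Relation.ReflTransGen.head h hD, hr⟩

private lemma sum_split {V : Type*} [Fintype V] [DecidableEq V] {v p : V} (hpv : p ≠ v)
    {M : Type*} [AddCommMonoid M] (f : V → M) :
    ∑ w, f w = f v + (f p + ∑ w ∈ (univ.erase v).erase p, f w) := by
  rw [← Finset.add_sum_erase _ f (mem_univ v),
      ← Finset.add_sum_erase _ f (mem_erase.mpr ⟨hpv, mem_univ p⟩)]

private lemma weight_lemma {V : Type*} [Fintype V] [DecidableEq V] {G : SimpleGraph V} {r : V}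
    (S : TreeStrategy G r) :
    ∀ (n : ℕ) (C : V → ℕ), (∑ v, C v) ≤ n → ¬ Solvable G r C →
      ∑ v, S.weight v * (C v : ℝ) ≤ ∑ v, S.weight v := by
  intro n
  induction n with
  | zero =>
    intro C hn _
    apply Finset.sum_le_sum
    intro v _
    have h0 : C v = 0 := Finset.sum_eq_zero_iff.mp (Nat.le_zero.mp hn) v (mem_univ v)
    simp [h0, S.weight_nonneg v]
  | succ n ih =>
    intro C hn hns
    by_cases hex : ∃ v, 0 < S.weight v ∧ 2 ≤ C v
    · obtain ⟨v, hwv, hCv⟩ := hex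
      have hv_mem : v ∈ S.verts := by
        by_contra hmem
        rw [S.weight_zero v hmem] at hwv; exact lt_irrefl 0 hwv
      have hv_ne : v ≠ r := by
        rintro rfl
        rw [S.weight_root] at hwv; exact lt_irrefl 0 hwv
      have hnadj : ¬ G.Adj v r := by
        intro hadj
        apply hns
        refine ⟨Function.update (Function.update C v (C v - 2)) r (C r + 1),
          Relation.ReflTransGen.single ⟨v, r, hadj, hCv, ?_, ?_, ?_⟩, ?_⟩
        · rw [Function.update_of_ne hv_ne, Function.update_self]
        · rw [Function.update_self]
        · intro w hw1 hw2
          rw [Function.update_of_ne hw2, Function.update_of_ne hw1]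
        · rw [Function.update_self]; omega
      have hadj' : G.Adj (S.parent v) v := S.parent_adj v hv_mem hv_ne
      have hpv : S.parent v ≠ v := hadj'.ne
      set p := S.parent v with hp
      set C' : V → ℕ := Function.update (Function.update C v (C v - 2)) p (C p + 1) with hC'
      have hC'v : C' v = C v - 2 := by
        rw [hC', Function.update_of_ne (Ne.symm hpv), Function.update_self]
      have hC'p : C' p = C p + 1 := by rw [hC', Function.update_self]
      have hC'w : ∀ w, w ≠ v → w ≠ p → C' w = C w := by
        intro w hw1 hw2
        rw [hC', Function.update_of_ne hw2, Function.update_of_ne hw1]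
      have hmove : IsPebblingMove G C C' := ⟨v, p, hadj'.symm, hCv, hC'v, hC'p, hC'w⟩
      have hns' : ¬ Solvable G r C' := fun h => hns (solvable_of_move hmove h)
      have hrest : ∀ w ∈ (univ.erase v).erase p, C' w = C w := by
        intro w hw
        rw [Finset.mem_erase, Finset.mem_erase] at hw
        exact hC'w w hw.2.1 hw.1
      have hsumC : ∑ w, C w = C v + (C p + ∑ w ∈ (univ.erase v).erase p, C w) :=
        sum_split hpv C
      have hsumC' : ∑ w, C' w = (C v - 2) + ((C p + 1) + ∑ w ∈ (univ.erase v).erase p, C w) := by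
        rw [sum_split hpv C', hC'v, hC'p, Finset.sum_congr rfl hrest]
      have hle : ∑ w, C' w ≤ n := by omega
      have hineq := ih C' hle hns'
      have hw_ineq : 2 * S.weight v ≤ S.weight p := S.weight_parent v hv_mem hv_ne hnadj
      have hstep : ∑ w, S.weight w * (C w : ℝ) ≤ ∑ w, S.weight w * (C' w : ℝ) := by
        rw [sum_split hpv (fun w => S.weight w * (C w : ℝ)),
            sum_split hpv (fun w => S.weight w * (C' w : ℝ))]
        have hrest' : ∑ w ∈ (univ.erase v).erase p, S.weight w * (C' w : ℝ)
            = ∑ w ∈ (univ.erase v).erase p, S.weight w * (C w : ℝ) :=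
          Finset.sum_congr rfl (fun w hw => by rw [hrest w hw])
        rw [hrest', hC'v, hC'p]
        have hcast : ((C v - 2 : ℕ) : ℝ) = (C v : ℝ) - 2 := by
          rw [Nat.cast_sub hCv]; norm_num
        rw [hcast]
        push_cast
        have hnn : (0:ℝ) ≤ S.weight p := S.weight_nonneg p
        nlinarith [S.weight_nonneg v]
      exact le_trans hstep hineq
    · push_neg at hex
      apply Finset.sum_le_sum
      intro v _
      rcases eq_or_lt_of_le (S.weight_nonneg v) with h0 | h0
      · rw [← h0]; simp
      · have h1 : C v ≤ 1 := by have := hex v h0; omega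
        calc S.weight v * (C v : ℝ) ≤ S.weight v * 1 := by
              apply mul_le_mul_of_nonneg_left _ (S.weight_nonneg v)
              exact_mod_cast h1
          _ = S.weight v := mul_one _

private lemma move_swap {V : Type*} {G : SimpleGraph V} {D D' : V × V → ℕ}
    (h : IsPebblingMove (G □ G) D D') :
    IsPebblingMove (G □ G) (D ∘ Prod.swap) (D' ∘ Prod.swap) := by
  obtain ⟨u, x, hadj, h2, hu, hx, ho⟩ := h
  refine ⟨u.swap, x.swap, ?_, by simpa using h2, by simpa using hu, by simpa using hx, ?_⟩
  · rw [SimpleGraph.boxProd_adj] at hadj ⊢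
    simp only [Prod.fst_swap, Prod.snd_swap]
    tauto
  · intro w hw1 hw2
    have h1 : w.swap ≠ u := fun h => hw1 (by rw [← h, Prod.swap_swap])
    have h2' : w.swap ≠ x := fun h => hw2 (by rw [← h, Prod.swap_swap])
    simpa using ho w.swap h1 h2'

private lemma swap_solvable {V : Type*} {G : SimpleGraph V} {r₀ : V} {C : V × V → ℕ}
    (h : Solvable (G □ G) (r₀, r₀) (C ∘ Prod.swap)) : Solvable (G □ G) (r₀, r₀) C := by
  obtain ⟨D, hD, hr⟩ := h
  have hlift : Relation.ReflTransGen (IsPebblingMove (G □ G)) ((C ∘ Prod.swap) ∘ Prod.swap)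
      (D ∘ Prod.swap) := Relation.ReflTransGen.lift (fun E => E ∘ Prod.swap)
    (fun a b hab => move_swap hab) _ _ hD
  have hcc : (C ∘ Prod.swap) ∘ Prod.swap = C := by funext x; simp
  have hlift' : Relation.ReflTransGen (IsPebblingMove (G □ G)) C (D ∘ Prod.swap) := by
    simpa [hcc] using hlift
  exact ⟨D ∘ Prod.swap, hlift', by simpa using hr⟩

private lemma sum_swap_eq {V : Type*} [Fintype V] (g : V × V → ℝ) :
    ∑ v : V × V, g v.swap = ∑ v : V × V, g v :=
  Fintype.sum_equiv (Equiv.prodComm V V) _ _ (fun x => by simp)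

/-- Symmetric covering bound: if `T` is an even positive integer and `w_1, …, w_{T/2}` are
weight functions of tree strategies of `G □ G` rooted at `r = (r₀, r₀)` such that
`Σ_t (w_t(v) + w_t(σ v)) ≥ T` for every `v ≠ r` (where `σ` swaps coordinates), then
`π(G □ G, r) ≤ ⌊ẑ/T⌋ + 1` with `ẑ = Σ_t Σ_{v ≠ r} (w_t(v) + w_t(σ v))`. -/
theorem symmetric_pebbling_bound {V : Type*} [Fintype V] [DecidableEq V]
    (G : SimpleGraph V) (hG : G.Connected) (r₀ : V)
    (T : ℕ) (hTpos : 0 < T) (hTeven : Even T)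
    (S : Fin (T / 2) → TreeStrategy (G □ G) (r₀, r₀))
    (hcov : ∀ v : V × V, v ≠ (r₀, r₀) →
      (T : ℝ) ≤ ∑ t : Fin (T / 2), ((S t).weight v + (S t).weight v.swap)) :
    pebblingNumber (G □ G) (r₀, r₀) ≤
      ⌊(∑ t : Fin (T / 2), ∑ v ∈ Finset.univ.erase (r₀, r₀),
          ((S t).weight v + (S t).weight v.swap)) / (T : ℝ)⌋₊ + 1 := by
  set z : ℝ := ∑ t : Fin (T / 2), ∑ v ∈ Finset.univ.erase (r₀, r₀),
      ((S t).weight v + (S t).weight v.swap) with hz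
  apply Nat.sInf_le
  intro C hC
  by_contra hns
  have hCr : C (r₀, r₀) = 0 := by
    by_contra h
    exact hns ⟨C, Relation.ReflTransGen.refl, by omega⟩
  have hns2 : ¬ Solvable (G □ G) (r₀, r₀) (C ∘ Prod.swap) := fun h => hns (swap_solvable h)
  have W1 : ∀ t, ∑ v, (S t).weight v * (C v : ℝ) ≤ ∑ v, (S t).weight v :=
    fun t => weight_lemma (S t) (∑ v, C v) C le_rfl hns
  have W2 : ∀ t, ∑ v, (S t).weight v * (C v.swap : ℝ) ≤ ∑ v, (S t).weight v := by
    intro t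
    have := weight_lemma (S t) (∑ v, (C ∘ Prod.swap) v) (C ∘ Prod.swap) le_rfl hns2
    simpa using this
  have erase_univ : ∀ f : V × V → ℝ, f (r₀, r₀) = 0 →
      ∑ v ∈ Finset.univ.erase (r₀, r₀), f v = ∑ v, f v := by
    intro f hf
    have h := Finset.add_sum_erase Finset.univ f (mem_univ (r₀, r₀))
    rw [hf, zero_add] at h
    exact h
  have hswapr : (Prod.swap (r₀, r₀) : V × V) = (r₀, r₀) := rfl
  -- per strategy bound
  have hA : ∀ t, ∑ v ∈ Finset.univ.erase (r₀, r₀),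
      ((S t).weight v + (S t).weight v.swap) * (C v : ℝ) ≤ 2 * ∑ v, (S t).weight v := by
    intro t
    have e1 : ∑ v ∈ Finset.univ.erase (r₀, r₀),
        ((S t).weight v + (S t).weight v.swap) * (C v : ℝ)
        = ∑ v, ((S t).weight v + (S t).weight v.swap) * (C v : ℝ) :=
      erase_univ _ (by simp [hCr])
    have e2 : ∑ v, ((S t).weight v + (S t).weight v.swap) * (C v : ℝ)
        = ∑ v, (S t).weight v * (C v : ℝ) + ∑ v, (S t).weight v.swap * (C v : ℝ) := by
      rw [← Finset.sum_add_distrib]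
      exact Finset.sum_congr rfl (fun v _ => by ring)
    have e3 : ∑ v : V × V, (S t).weight v.swap * (C v : ℝ)
        = ∑ v : V × V, (S t).weight v * (C v.swap : ℝ) := by
      rw [← sum_swap_eq (fun v => (S t).weight v * (C v.swap : ℝ))]
      exact Finset.sum_congr rfl (fun v _ => by simp)
    rw [e1, e2, e3]
    have := W1 t
    have := W2 t
    linarith
  have hB : ∀ t, ∑ v ∈ Finset.univ.erase (r₀, r₀),
      ((S t).weight v + (S t).weight v.swap) = 2 * ∑ v, (S t).weight v := by
    intro t
    have e1 : ∑ v ∈ Finset.univ.erase (r₀, r₀), ((S t).weight v + (S t).weight v.swap)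
        = ∑ v, ((S t).weight v + (S t).weight v.swap) :=
      erase_univ _ (by rw [hswapr, (S t).weight_root]; ring)
    rw [e1, Finset.sum_add_distrib, sum_swap_eq (fun v => (S t).weight v)]
    ring
  have htot : (T : ℝ) * (∑ v, (C v : ℝ)) ≤ z := by
    have s0 : (T : ℝ) * (∑ v, (C v : ℝ)) = ∑ v ∈ Finset.univ.erase (r₀, r₀), (T : ℝ) * (C v : ℝ) := by
      rw [erase_univ (fun v => (T : ℝ) * (C v : ℝ)) (by simp [hCr]), Finset.mul_sum]
    rw [s0]
    calc ∑ v ∈ Finset.univ.erase (r₀, r₀), (T : ℝ) * (C v : ℝ)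
        ≤ ∑ v ∈ Finset.univ.erase (r₀, r₀),
            (∑ t : Fin (T / 2), ((S t).weight v + (S t).weight v.swap)) * (C v : ℝ) := by
          apply Finset.sum_le_sum
          intro v hv
          exact mul_le_mul_of_nonneg_right (hcov v (Finset.mem_erase.mp hv).1) (Nat.cast_nonneg _)
      _ = ∑ t : Fin (T / 2), ∑ v ∈ Finset.univ.erase (r₀, r₀),
            ((S t).weight v + (S t).weight v.swap) * (C v : ℝ) := by
          simp_rw [Finset.sum_mul]
          exact Finset.sum_comm
      _ ≤ ∑ t : Fin (T / 2), 2 * ∑ v, (S t).weight v :=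
          Finset.sum_le_sum (fun t _ => hA t)
      _ = z := by
          rw [hz]
          exact (Finset.sum_congr rfl (fun t _ => hB t)).symm
  have hTpos' : (0 : ℝ) < (T : ℝ) := by exact_mod_cast hTpos
  have hn : ((∑ v, C v : ℕ) : ℝ) ≤ z / (T : ℝ) := by
    rw [le_div_iff₀ hTpos']
    push_cast
    linarith
  have hfl : (∑ v, C v) ≤ ⌊z / (T : ℝ)⌋₊ := Nat.le_floor hn
  omega
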